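/- arXiv:1803.06988 — 2 statements merged into one kernel-verified Lean document; each statement's English description precedes it below -/
import Mathlib

section
/- If 𝔰₁ and 𝔰₂ are ideals of a finite-dimensional solvable Lie algebra 𝔤 over ℝ such that for every X ∈ 𝔰₁ and every X ∈ 𝔰₂ the operator ad X : 𝔤 → 𝔤 has only real eigenvalues, then for every X ∈ 𝔰₁ + 𝔰₂ the operator ad X has only real eigenvalues. -/
/-- A real-linear endomorphism has only real eigenvalues, computed on the
complexification. -/
def HasOnlyRealEigenvalues {V : Type*} [AddCommGroup V] [Module ℝ V]
    (f : V →ₗ[ℝ] V) : Prop :=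
  ∀ μ : ℂ, Module.End.HasEigenvalue (LinearMap.baseChange ℂ f) μ → μ.im = 0

open Module Submodule Set TensorProduct

universe u v

section AuxLie
variable {M : Type v} [AddCommGroup M] [Module ℂ M] [FiniteDimensional ℂ M]

private lemma exists_chain (z : M →ₗ[ℂ] M) {m : M} (hm : m ≠ 0) :
    ∃ r : ℕ, 0 < r ∧ LinearIndependent ℂ (fun i : Fin r => (z ^ (i : ℕ)) m) ∧
      (z ^ r) m ∈ span ℂ (Set.range fun i : Fin r => (z ^ (i : ℕ)) m) := by
  classical
  set p : ℕ → Prop := fun k => (z ^ k) m ∈ span ℂ (Set.range fun i : Fin k => (z ^ (i : ℕ)) m)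
    with hp
  -- independence up to k if no p j for j ≤ k fails... build incrementally
  have indep : ∀ k : ℕ, (∀ j < k, ¬ p j) → LinearIndependent ℂ (fun i : Fin k => (z ^ (i : ℕ)) m) := by
    intro k
    induction k with
    | zero => intro _; exact linearIndependent_empty_type
    | succ n ih =>
      intro h
      have hind := ih (fun j hj => h j (hj.trans (Nat.lt_succ_self n)))
      have : (fun i : Fin (n+1) => (z ^ (i : ℕ)) m) =
          Fin.snoc (fun i : Fin n => (z ^ (i : ℕ)) m) ((z ^ n) m) := by
        ext i
        refine Fin.lastCases ?_ ?_ i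
        · simp [Fin.snoc_last]
        · intro j; simp [Fin.snoc_castSucc]
      rw [this, linearIndependent_fin_snoc]
      exact ⟨hind, h n (Nat.lt_succ_self n)⟩
  have hex : ∃ k, p k := by
    by_contra hno
    push_neg at hno
    have h1 := indep (finrank ℂ M + 1) (fun j _ => hno j)
    have := h1.fintype_card_le_finrank
    simp at this
  refine ⟨Nat.find hex, ?_, indep _ (fun j hj => Nat.find_min hex hj), Nat.find_spec hex⟩
  rcases Nat.eq_zero_or_pos (Nat.find hex) with h0 | h0
  · exfalso
    have := Nat.find_spec hex
    rw [h0] at this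
    simp only [p] at this
    rw [show (Set.range fun i : Fin 0 => (z ^ (i:ℕ)) m) = ∅ from Set.range_eq_empty _, span_empty,
      mem_bot] at this
    simp at this
    exact hm this
  · exact h0

private lemma key_vanish (z : M →ₗ[ℂ] M) {S : Type*} (op : S → (M →ₗ[ℂ] M)) (c : S → ℂ)
    (br : S → S) (hbr : ∀ b, op (br b) = op b ∘ₗ z - z ∘ₗ op b)
    {w : M} (hw : w ≠ 0) (hwe : ∀ b, op b w = c b • w) :
    ∀ b, c (br b) = 0 := by
  classical
  set g : ℕ → M := fun i => (z ^ i) w with hg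
  have hgsucc : ∀ i, g (i + 1) = z (g i) := by
    intro i; simp only [hg, pow_succ', Module.End.mul_apply]
  -- claim 3 : triangularity
  have claim3 : ∀ (i : ℕ) (b : S), op b (g i) - c b • g i ∈ span ℂ (g '' Iio i) := by
    intro i
    induction i with
    | zero => intro b; rw [show g 0 = w from rfl, hwe b, sub_self]; exact zero_mem _
    | succ i ih =>
      intro b
      have h1 : op b (g (i + 1)) = op (br b) (g i) + z (op b (g i)) := by
        have := congrArg (fun F : M →ₗ[ℂ] M => F (g i)) (hbr b)
        simp only [LinearMap.sub_apply, LinearMap.comp_apply] at this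
        rw [hgsucc, this]
        abel
      have hz_span : ∀ u ∈ span ℂ (g '' Iio i), z u ∈ span ℂ (g '' Iio (i + 1)) := by
        intro u hu
        have : z u ∈ Submodule.map z (span ℂ (g '' Iio i)) := Submodule.mem_map_of_mem hu
        rw [Submodule.map_span] at this
        refine span_le.2 ?_ this
        rintro - ⟨-, ⟨j, hj, rfl⟩, rfl⟩
        exact subset_span ⟨j + 1, by simpa using Nat.succ_lt_succ hj, hgsucc j⟩
      have hmono : span ℂ (g '' Iio i) ≤ span ℂ (g '' Iio (i + 1)) :=
        span_mono (image_mono (fun t ht => lt_trans ht (Nat.lt_succ_self i)))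
      have hgi : g i ∈ span ℂ (g '' Iio (i + 1)) :=
        subset_span ⟨i, Nat.lt_succ_self i, rfl⟩
      have e1 : op (br b) (g i) = c (br b) • g i + (op (br b) (g i) - c (br b) • g i) := by abel
      have e2 : op b (g i) = c b • g i + (op b (g i) - c b • g i) := by abel
      have hd1 := ih (br b)
      have hd2 := ih b
      rw [h1, e1, e2]
      have : z (c b • g i + (op b (g i) - c b • g i))
          = c b • g (i+1) + z (op b (g i) - c b • g i) := by
        rw [map_add, map_smul, hgsucc]
      rw [this]
      have goal_eq : c (br b) • g i + (op (br b) (g i) - c (br b) • g i) +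
          (c b • g (i+1) + z (op b (g i) - c b • g i)) - c b • g (i+1)
          = c (br b) • g i + (op (br b) (g i) - c (br b) • g i) + z (op b (g i) - c b • g i) := by
        abel
      rw [goal_eq]
      exact add_mem (add_mem (smul_mem _ _ hgi) (hmono hd1)) (hz_span _ hd2)
  intro b
  obtain ⟨r, hr0, hind, hspan⟩ := exists_chain z hw
  have himg : (Set.range fun i : Fin r => g i) = g '' Iio r := by
    ext y; constructor
    · rintro ⟨i, rfl⟩; exact ⟨i, i.isLt, rfl⟩
    · rintro ⟨j, hj, rfl⟩; exact ⟨⟨j, hj⟩, rfl⟩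
  set U : Submodule ℂ M := span ℂ (Set.range fun i : Fin r => g i) with hU
  have hUIio : U = span ℂ (g '' Iio r) := by rw [hU, himg]
  -- U is invariant under z
  have hUz : ∀ u ∈ U, z u ∈ U := by
    intro u hu
    have : z u ∈ Submodule.map z U := Submodule.mem_map_of_mem hu
    rw [hU, Submodule.map_span] at this
    refine span_le.2 ?_ this
    rintro - ⟨-, ⟨i, rfl⟩, rfl⟩
    rcases lt_or_eq_of_le (Nat.succ_le_of_lt i.isLt) with h | h
    · exact subset_span ⟨⟨(i : ℕ) + 1, h⟩, hgsucc i⟩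
    · have hh : (i : ℕ) + 1 = r := h
      rw [← hgsucc, hh]; exact hspan
  -- U is invariant under every op b
  have hUop : ∀ b : S, ∀ u ∈ U, op b u ∈ U := by
    intro b u hu
    have : op b u ∈ Submodule.map (op b) U := Submodule.mem_map_of_mem hu
    rw [hU, Submodule.map_span] at this
    refine span_le.2 ?_ this
    rintro - ⟨-, ⟨i, rfl⟩, rfl⟩
    have h3 := claim3 i b
    have : op b (g i) = c b • g i + (op b (g i) - c b • g i) := by abel
    rw [this]
    refine add_mem (smul_mem _ _ (subset_span ⟨i, rfl⟩)) ?_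
    rw [hUIio]
    exact span_mono (image_mono (fun t ht => lt_trans ht i.isLt)) h3
  -- the basis of U
  let B : Module.Basis (Fin r) ℂ U := Module.Basis.span hind
  have hB : ∀ i : Fin r, (B i : M) = g i := fun i => congrArg Subtype.val (Module.Basis.span_apply hind i)
  -- diagonal entries
  have hdiag : ∀ (b' : S) (i : Fin r),
      B.repr (((op b').restrict (hUop b')) (B i)) i = c b' := by
    intro b' i
    have h3 : op b' (g i) - c b' • g i ∈ span ℂ (g '' Iio (i : ℕ)) := claim3 i b'
    set s : Set (Fin r) := {j | (j : ℕ) < (i : ℕ)} with hs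
    have himg2 : U.subtype '' (B '' s) = g '' Iio (i : ℕ) := by
      ext y; constructor
      · rintro ⟨-, ⟨j, hj, rfl⟩, rfl⟩; exact ⟨j, hj, (hB j).symm⟩
      · rintro ⟨j, hj, rfl⟩
        exact ⟨B ⟨j, lt_trans hj i.isLt⟩, ⟨⟨j, lt_trans hj i.isLt⟩, hj, rfl⟩, hB _⟩
    have hd : op b' (g i) - c b' • g i ∈ Submodule.map U.subtype (span ℂ (B '' s)) := by
      rw [Submodule.map_span, himg2]; exact h3
    obtain ⟨d', hd', hdd⟩ := hd
    have hrepr0 : B.repr d' i = 0 := by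
      have hsupp := (B.mem_span_image (m := d') (s := s)).1 hd'
      by_contra h0
      exact absurd (hsupp (Finsupp.mem_support_iff.2 h0)) (by simp [hs])
    have heq : ((op b').restrict (hUop b')) (B i) = c b' • B i + d' := by
      apply Subtype.ext
      have hdd' : (d' : M) = op b' (g i) - c b' • g i := hdd
      push_cast [LinearMap.restrict_apply, hB, hdd']
      abel
    rw [heq]
    simp [hrepr0, Module.Basis.repr_self]
  -- trace of restriction of op b' equals r • c b'
  have htr : ∀ b' : S, LinearMap.trace ℂ U ((op b').restrict (hUop b')) = (r : ℂ) * c b' := by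
    intro b'
    classical
    rw [LinearMap.trace_eq_matrix_trace ℂ B, Matrix.trace]
    have : ∀ i : Fin r, (LinearMap.toMatrix B B ((op b').restrict (hUop b'))) i i = c b' := by
      intro i
      rw [LinearMap.toMatrix_apply]
      exact hdiag b' i
    simp only [Matrix.diag_apply, this, Finset.sum_const, Finset.card_univ, Fintype.card_fin,
      nsmul_eq_mul]
  -- trace of restriction of op (br b) is zero
  have hcomm : (op (br b)).restrict (hUop (br b))
      = (op b).restrict (hUop b) * z.restrict hUz - z.restrict hUz * (op b).restrict (hUop b) := by
    apply LinearMap.ext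
    intro u
    apply Subtype.ext
    have := congrArg (fun F : M →ₗ[ℂ] M => F (u : M)) (hbr b)
    simpa [LinearMap.restrict_apply] using this
  have htr0 : LinearMap.trace ℂ U ((op (br b)).restrict (hUop (br b))) = 0 := by
    rw [hcomm, map_sub, LinearMap.trace_mul_comm, sub_self]
  have := htr (br b)
  rw [htr0] at this
  have hr' : (r : ℂ) ≠ 0 := Nat.cast_ne_zero.2 hr0.ne'
  exact (mul_eq_zero.1 this.symm).resolve_left hr'


private theorem lie_thm : ∀ (n : ℕ) (L : Type u) [LieRing L] [LieAlgebra ℝ L]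
    [FiniteDimensional ℝ L] [LieAlgebra.IsSolvable L], finrank ℝ L ≤ n →
    ∀ [Nontrivial M] (ρ : L → (M →ₗ[ℂ] M)),
    (∀ x y, ρ (x + y) = ρ x + ρ y) →
    (∀ (t : ℝ) x, ρ (t • x) = (t : ℂ) • ρ x) →
    (∀ x y, ρ ⁅x, y⁆ = ρ x ∘ₗ ρ y - ρ y ∘ₗ ρ x) →
    ∃ (χ : L →ₗ[ℝ] ℂ) (v : M), v ≠ 0 ∧ ∀ x, ρ x v = χ x • v := by
  intro n
  induction n with
  | zero =>
    intro L _ _ _ _ hrank _ ρ hadd hsmul hlie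
    have : Subsingleton L := by
      have := Nat.le_zero.1 hrank
      exact finrank_zero_iff.1 this
    obtain ⟨v, hv⟩ := exists_ne (0 : M)
    refine ⟨0, v, hv, fun x => ?_⟩
    have hx : x = 0 := Subsingleton.elim _ _
    have h0 : ρ 0 = 0 := by
      have := hsmul 0 0
      simpa using this
    rw [hx, h0]
    simp
  | succ n ih =>
    intro L _ _ _ _ hrank _ ρ hadd hsmul hlie
    rcases subsingleton_or_nontrivial L with hL | hL
    · obtain ⟨v, hv⟩ := exists_ne (0 : M)
      refine ⟨0, v, hv, fun x => ?_⟩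
      have hx : x = 0 := Subsingleton.elim _ _
      have h0 : ρ 0 = 0 := by simpa using hsmul 0 0
      rw [hx, h0]; simp
    -- derived series and codimension 1 ideal
    · have hder := LieAlgebra.derivedSeries_lt_top_of_solvable ℝ L
      set DS : Submodule ℝ L := (LieAlgebra.derivedSeries ℝ L 1).toSubmodule with hDS
      have hDSne : ∃ z : L, z ∉ DS := by
        by_contra hcon
        push_neg at hcon
        have : (LieAlgebra.derivedSeries ℝ L 1) = ⊤ := by
          ext y; exact ⟨fun _ => LieSubmodule.mem_top y, fun _ => hcon y⟩
        exact absurd this hder.ne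
      obtain ⟨z₁, hz₁⟩ := hDSne
      obtain ⟨f₀, hf₀z, hf₀DS⟩ := Submodule.exists_dual_map_eq_bot_of_notMem hz₁ inferInstance
      set f : L →ₗ[ℝ] ℝ := (f₀ z₁)⁻¹ • f₀ with hf
      set z₀ : L := z₁ with hz₀
      have hfz : f z₀ = 1 := by
        simp only [hf, LinearMap.smul_apply, smul_eq_mul]
        field_simp
      have hfDS : ∀ d ∈ DS, f d = 0 := by
        intro d hd
        have : f₀ d = 0 := by
          have : f₀ d ∈ DS.map f₀ := ⟨d, hd, rfl⟩
          rwa [hf₀DS, Submodule.mem_bot] at this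
        simp [hf, this]
      have hfbr : ∀ x y : L, f ⁅x, y⁆ = 0 := by
        intro x y
        apply hfDS
        have : ⁅x, y⁆ ∈ (LieAlgebra.derivedSeries ℝ L 1) := by
          rw [LieAlgebra.derivedSeries_def, LieAlgebra.derivedSeriesOfIdeal_succ,
            LieAlgebra.derivedSeriesOfIdeal_zero]
          exact LieSubmodule.lie_mem_lie (LieSubmodule.mem_top _) (LieSubmodule.mem_top _)
        exact this
      -- the codimension one subalgebra
      set K : LieSubalgebra ℝ L :=
        { toSubmodule := LinearMap.ker f
          lie_mem' := fun {x y} _ _ => LinearMap.mem_ker.2 (hfbr x y) } with hK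
      haveI : FiniteDimensional ℝ ↥K := inferInstanceAs (FiniteDimensional ℝ (LinearMap.ker f))
      haveI : LieAlgebra.IsSolvable ↥K :=
        Function.Injective.lieAlgebra_isSolvable (f := K.incl) Subtype.coe_injective
      have hKrank : finrank ℝ ↥K ≤ n := by
        have h1 : K.toSubmodule < ⊤ := by
          rw [lt_top_iff_ne_top]
          intro hcon
          have : z₀ ∈ K.toSubmodule := hcon ▸ Submodule.mem_top
          have : f z₀ = 0 := this
          rw [hfz] at this; exact one_ne_zero this
        have h2 := Submodule.finrank_lt (K := ℝ) (V := L) h1.ne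
        have h3 : finrank ℝ ↥K = finrank ℝ ↥K.toSubmodule := rfl
        omega
      -- apply the inductive hypothesis to K
      obtain ⟨χ, w, hw, hwe⟩ := ih ↥K hKrank (fun b : ↥K => ρ ↑b)
        (fun b c => by rw [← hadd]; rfl)
        (fun t b => by rw [← hsmul]; rfl)
        (fun b c => by rw [← hlie]; rfl)
      -- the simultaneous eigenspace
      set W : Submodule ℂ M := ⨅ b : ↥K, LinearMap.ker (ρ ↑b - χ b • (1 : M →ₗ[ℂ] M)) with hW
      have hmemW : ∀ m : M, m ∈ W ↔ ∀ b : ↥K, ρ ↑b m = χ b • m := by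
        intro m
        simp only [hW, Submodule.mem_iInf, LinearMap.mem_ker, LinearMap.sub_apply,
          LinearMap.smul_apply, Module.End.one_apply, sub_eq_zero]
      have hwW : w ∈ W := (hmemW w).2 hwe
      -- key vanishing and invariance of W
      have hvan : ∀ (x : L) (b : ↥K), χ ⟨⁅(b : L), x⁆, LinearMap.mem_ker.2 (hfbr _ _)⟩ = 0 := by
        intro x b
        exact key_vanish (ρ x) (fun b : ↥K => ρ ↑b) (fun b => χ b)
          (fun b => ⟨⁅(b : L), x⁆, LinearMap.mem_ker.2 (hfbr _ _)⟩)
          (fun b => hlie _ _) hw hwe b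
      have hWinv : ∀ (x : L), ∀ m ∈ W, ρ x m ∈ W := by
        intro x m hm
        rw [hmemW] at hm ⊢
        intro b
        have h1 := congrArg (fun F : M →ₗ[ℂ] M => F m) (hlie (b : L) x)
        simp only [LinearMap.sub_apply, LinearMap.comp_apply] at h1
        have h2 : ρ ⁅(b : L), x⁆ m = 0 := by
          have hb' := hm ⟨⁅(b : L), x⁆, LinearMap.mem_ker.2 (hfbr _ _)⟩
          rw [hb', hvan x b, zero_smul]
        have : ρ (b : L) (ρ x m) = ρ x (ρ (b : L) m) := by
          rw [← sub_eq_zero, ← h2, h1]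
        rw [this, hm b, map_smul]
      -- find an eigenvector of ρ z₀ in W
      haveI : Nontrivial ↥W := Submodule.nontrivial_iff_ne_bot.2 (by
        intro hcon
        rw [hcon] at hwW
        exact hw (Submodule.mem_bot ℂ |>.1 hwW))
      set zW : ↥W →ₗ[ℂ] ↥W := (ρ z₀).restrict (hWinv z₀) with hzW
      obtain ⟨c, hc⟩ := Module.End.exists_eigenvalue zW
      obtain ⟨v', hv'⟩ := hc.exists_hasEigenvector
      have hv'0 : (v' : M) ≠ 0 := fun hcon => hv'.right (Subtype.ext hcon)
      have hv'eq : ρ z₀ (v' : M) = c • (v' : M) := by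
        have := hv'.apply_eq_smul
        have h2 := congrArg (Subtype.val) this
        simpa [hzW, LinearMap.restrict_apply] using h2
      -- assemble the linear functional
      set π : L →ₗ[ℝ] ↥K :=
        LinearMap.codRestrict K.toSubmodule (LinearMap.id - f.smulRight z₀)
          (fun x => LinearMap.mem_ker.2 (by
            rw [LinearMap.sub_apply, LinearMap.id_apply, LinearMap.smulRight_apply, map_sub,
              map_smul, hfz, smul_eq_mul, mul_one, sub_self])) with hπ
      set χ' : L →ₗ[ℝ] ℂ := χ.comp π + f.smulRight c with hχ'
      refine ⟨χ', (v' : M), hv'0, fun x => ?_⟩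
      have hπx : ((π x : L)) = x - f x • z₀ := rfl
      have hxdec : x = ((π x : L)) + f x • z₀ := by rw [hπx]; abel
      have hρx : ρ x = ρ ((π x : L)) + (f x : ℂ) • ρ z₀ := by
        conv_lhs => rw [hxdec]
        rw [hadd, hsmul]
      rw [hρx]
      have hπv : ρ ((π x : L)) (v' : M) = χ (π x) • (v' : M) := (hmemW _).1 (W.coe_mem v') (π x)
      simp only [LinearMap.add_apply, LinearMap.smul_apply, hπv, hv'eq, hχ', LinearMap.comp_apply,
        LinearMap.smulRight_apply]
      rw [add_smul, smul_smul, Complex.real_smul]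

end AuxLie

section AuxB
variable {M : Type v}

private theorem thmB : ∀ (n : ℕ) (M : Type v) [AddCommGroup M] [Module ℂ M] [FiniteDimensional ℂ M],
    finrank ℂ M ≤ n →
    ∀ (L : Type u) [LieRing L] [LieAlgebra ℝ L] [FiniteDimensional ℝ L]
      [LieAlgebra.IsSolvable L] (ρ : L → (M →ₗ[ℂ] M)),
    (∀ x y, ρ (x + y) = ρ x + ρ y) →
    (∀ (t : ℝ) x, ρ (t • x) = (t : ℂ) • ρ x) →
    (∀ x y, ρ ⁅x, y⁆ = ρ x ∘ₗ ρ y - ρ y ∘ₗ ρ x) →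
    ∃ (N : ℕ) (χ : Fin N → (L →ₗ[ℝ] ℂ)), ∀ (x : L) (μ : ℂ),
      Module.End.HasEigenvalue (ρ x) μ ↔ ∃ i, μ = χ i x := by
  intro n
  induction n with
  | zero =>
    intro M _ _ _ hrank L _ _ _ _ ρ hadd hsmul hlie
    haveI : Subsingleton M := finrank_zero_iff.1 (Nat.le_zero.1 hrank)
    refine ⟨0, Fin.elim0, fun x μ => ⟨fun h => ?_, fun ⟨i, _⟩ => i.elim0⟩⟩
    exact absurd (Subsingleton.elim _ _) (Module.End.hasEigenvalue_iff.1 h)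
  | succ n ih =>
    intro M _ _ _ hrank L _ _ _ _ ρ hadd hsmul hlie
    rcases subsingleton_or_nontrivial M with hM | hM
    · refine ⟨0, Fin.elim0, fun x μ => ⟨fun h => ?_, fun ⟨i, _⟩ => i.elim0⟩⟩
      exact absurd (Subsingleton.elim _ _) (Module.End.hasEigenvalue_iff.1 h)
    · obtain ⟨χ₀, v, hv, hveq⟩ := lie_thm (finrank ℝ L) L le_rfl ρ hadd hsmul hlie
      set N₀ : Submodule ℂ M := ℂ ∙ v with hN₀
      have hinv : ∀ x : L, N₀ ≤ N₀.comap (ρ x) := by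
        intro x u hu
        rw [hN₀, Submodule.mem_span_singleton] at hu
        obtain ⟨t, rfl⟩ := hu
        simp only [Submodule.mem_comap, map_smul, hveq x]
        exact Submodule.smul_mem _ _ (Submodule.smul_mem _ _
          (Submodule.mem_span_singleton_self v))
      set ρ' : L → (M ⧸ N₀) →ₗ[ℂ] (M ⧸ N₀) := fun x => Submodule.mapQ N₀ N₀ (ρ x) (hinv x)
        with hρ'
      have hρ'mk : ∀ (x : L) (m : M), ρ' x (Submodule.Quotient.mk m)
          = Submodule.Quotient.mk (ρ x m) := fun x m => rfl
      have hq : finrank ℂ (M ⧸ N₀) ≤ n := by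
        have h1 := Submodule.finrank_quotient_add_finrank N₀
        have h2 : finrank ℂ N₀ = 1 := finrank_span_singleton hv
        omega
      have hadd' : ∀ x y, ρ' (x + y) = ρ' x + ρ' y := by
        intro x y
        apply LinearMap.ext
        intro u
        obtain ⟨m, rfl⟩ := Submodule.Quotient.mk_surjective N₀ u
        simp only [hρ'mk, LinearMap.add_apply, hadd, ← Submodule.Quotient.mk_add]
      have hsmul' : ∀ (t : ℝ) x, ρ' (t • x) = (t : ℂ) • ρ' x := by
        intro t x
        apply LinearMap.ext
        intro u
        obtain ⟨m, rfl⟩ := Submodule.Quotient.mk_surjective N₀ u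
        simp only [hρ'mk, LinearMap.smul_apply, hsmul, ← Submodule.Quotient.mk_smul]
      have hlie' : ∀ x y, ρ' ⁅x, y⁆ = ρ' x ∘ₗ ρ' y - ρ' y ∘ₗ ρ' x := by
        intro x y
        apply LinearMap.ext
        intro u
        obtain ⟨m, rfl⟩ := Submodule.Quotient.mk_surjective N₀ u
        have := congrArg (fun F : M →ₗ[ℂ] M => F m) (hlie x y)
        simp only [LinearMap.sub_apply, LinearMap.comp_apply] at this
        simp only [hρ'mk, LinearMap.sub_apply, LinearMap.comp_apply, hρ'mk, this,
          ← Submodule.Quotient.mk_sub]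
      obtain ⟨N', χ', hχ'⟩ := ih (M ⧸ N₀) hq L ρ' hadd' hsmul' hlie'
      refine ⟨N' + 1, Fin.cons χ₀ χ', fun x μ => ⟨fun h => ?_, fun ⟨i, hi⟩ => ?_⟩⟩
      · obtain ⟨u, hu⟩ := h.exists_hasEigenvector
        have hueq : ρ x u = μ • u := hu.apply_eq_smul
        by_cases hmem : u ∈ N₀
        · rw [hN₀, Submodule.mem_span_singleton] at hmem
          obtain ⟨t, rfl⟩ := hmem
          have ht : t ≠ 0 := fun h0 => hu.right (by rw [h0, zero_smul])
          rw [map_smul, hveq x, smul_smul, smul_smul] at hueq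
          have : (t * χ₀ x - μ * t) • v = 0 := by
            rw [sub_smul, hueq, sub_self]
          rcases smul_eq_zero.1 this with h0 | h0
          · refine ⟨0, ?_⟩
            rw [Fin.cons_zero]
            have h2 : t * μ = t * χ₀ x := by linear_combination -h0
            exact mul_left_cancel₀ ht h2
          · exact absurd h0 hv
        · have humk : (Submodule.Quotient.mk u : M ⧸ N₀) ≠ 0 :=
            fun h0 => hmem ((Submodule.Quotient.mk_eq_zero N₀).1 h0)
          have : ρ' x (Submodule.Quotient.mk u) = μ • Submodule.Quotient.mk u := by
            rw [hρ'mk, hueq, Submodule.Quotient.mk_smul]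
          have hev : Module.End.HasEigenvalue (ρ' x) μ :=
            Module.End.hasEigenvalue_of_hasEigenvector
              ⟨Module.End.mem_eigenspace_iff.2 this, humk⟩
          obtain ⟨i, hi⟩ := (hχ' x μ).1 hev
          exact ⟨i.succ, by rwa [Fin.cons_succ]⟩
      · subst hi
        refine Fin.cases ?_ ?_ i
        · rw [Fin.cons_zero]
          exact Module.End.hasEigenvalue_of_hasEigenvector
            ⟨Module.End.mem_eigenspace_iff.2 (hveq x), hv⟩
        · intro j
          rw [Fin.cons_succ]
          set μ := χ' j x with hμ
          have hev' : Module.End.HasEigenvalue (ρ' x) μ := (hχ' x μ).2 ⟨j, rfl⟩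
          by_contra hcon
          -- ρ x - μ • 1 is injective, hence surjective, hence ρ' x - μ • 1 surjective,
          -- hence injective, contradicting the eigenvalue on the quotient
          have hinj : Function.Injective (ρ x - μ • (1 : M →ₗ[ℂ] M)) := by
            rw [← LinearMap.ker_eq_bot]
            apply LinearMap.ker_eq_bot'.2
            intro m hm
            by_contra hm0
            simp only [LinearMap.sub_apply, LinearMap.smul_apply, Module.End.one_apply,
              sub_eq_zero] at hm
            exact hcon (Module.End.hasEigenvalue_of_hasEigenvector
              ⟨Module.End.mem_eigenspace_iff.2 hm, hm0⟩)
          have hsurj : Function.Surjective (ρ x - μ • (1 : M →ₗ[ℂ] M)) :=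
            (LinearMap.injective_iff_surjective).1 hinj
          have hsurj' : Function.Surjective (ρ' x - μ • (1 : (M ⧸ N₀) →ₗ[ℂ] (M ⧸ N₀))) := by
            intro u
            obtain ⟨m, rfl⟩ := Submodule.Quotient.mk_surjective N₀ u
            obtain ⟨m', hm'⟩ := hsurj m
            refine ⟨Submodule.Quotient.mk m', ?_⟩
            simp only [LinearMap.sub_apply, LinearMap.smul_apply, Module.End.one_apply] at hm' ⊢
            rw [hρ'mk, ← Submodule.Quotient.mk_smul, ← Submodule.Quotient.mk_sub, hm']
          have hinj' : Function.Injective (ρ' x - μ • (1 : (M ⧸ N₀) →ₗ[ℂ] (M ⧸ N₀))) :=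
            (LinearMap.injective_iff_surjective).2 hsurj'
          obtain ⟨u', hu'⟩ := hev'.exists_hasEigenvector
          apply hu'.right
          apply hinj'
          simp only [LinearMap.sub_apply, LinearMap.smul_apply, Module.End.one_apply, map_zero,
            hu'.apply_eq_smul, sub_self]

end AuxB

/-- The sum of two completely solvable ideals of a finite-dimensional real solvable
Lie algebra is completely solvable: if `ad X` has only real eigenvalues for all `X`
in each of the two ideals, the same holds for all `X` in their sum. -/
theorem sum_of_completely_solvable_ideals {𝔤 : Type*} [LieRing 𝔤] [LieAlgebra ℝ 𝔤]
    [FiniteDimensional ℝ 𝔤] [LieAlgebra.IsSolvable 𝔤]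
    (𝔰₁ 𝔰₂ : LieIdeal ℝ 𝔤)
    (h₁ : ∀ X ∈ 𝔰₁, HasOnlyRealEigenvalues (LieAlgebra.ad ℝ 𝔤 X))
    (h₂ : ∀ X ∈ 𝔰₂, HasOnlyRealEigenvalues (LieAlgebra.ad ℝ 𝔤 X)) :
    ∀ X ∈ 𝔰₁ ⊔ 𝔰₂, HasOnlyRealEigenvalues (LieAlgebra.ad ℝ 𝔤 X) := by
  classical
  set M := ℂ ⊗[ℝ] 𝔤 with hM
  set ρ : 𝔤 → (M →ₗ[ℂ] M) := fun X => (LieAlgebra.ad ℝ 𝔤 X).baseChange ℂ with hρ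
  have hadd : ∀ x y, ρ (x + y) = ρ x + ρ y := by
    intro x y
    show (LieAlgebra.ad ℝ 𝔤 (x + y)).baseChange ℂ
      = (LieAlgebra.ad ℝ 𝔤 x).baseChange ℂ + (LieAlgebra.ad ℝ 𝔤 y).baseChange ℂ
    rw [map_add, LinearMap.baseChange_add]
  have hsmul : ∀ (t : ℝ) x, ρ (t • x) = (t : ℂ) • ρ x := by
    intro t x
    show (LieAlgebra.ad ℝ 𝔤 (t • x)).baseChange ℂ = (t : ℂ) • (LieAlgebra.ad ℝ 𝔤 x).baseChange ℂ
    have h2 : ((t : ℂ)) • (LieAlgebra.ad ℝ 𝔤 x).baseChange ℂ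
        = t • (LieAlgebra.ad ℝ 𝔤 x).baseChange ℂ := by
      rw [← Complex.coe_algebraMap]
      exact algebraMap_smul ℂ t _
    rw [map_smul, LinearMap.baseChange_smul, ← h2]
  have hlie : ∀ x y, ρ ⁅x, y⁆ = ρ x ∘ₗ ρ y - ρ y ∘ₗ ρ x := by
    intro x y
    have : LieAlgebra.ad ℝ 𝔤 ⁅x, y⁆
        = LieAlgebra.ad ℝ 𝔤 x ∘ₗ LieAlgebra.ad ℝ 𝔤 y - LieAlgebra.ad ℝ 𝔤 y ∘ₗ LieAlgebra.ad ℝ 𝔤 x := by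
      ext z
      simp only [LieAlgebra.ad_apply, LinearMap.sub_apply, LinearMap.comp_apply, lie_lie]
    rw [hρ]
    simp only [this, LinearMap.baseChange_sub, LinearMap.baseChange_comp]
  obtain ⟨N, χ, hχ⟩ := thmB (finrank ℂ M) M le_rfl 𝔤 ρ hadd hsmul hlie
  intro X hX μ hμ
  obtain ⟨X₁, hX₁, X₂, hX₂, hXsum⟩ := (LieSubmodule.mem_sup _ _ _).1 hX
  obtain ⟨i, hi⟩ := (hχ X μ).1 hμ
  have hval : μ = χ i X₁ + χ i X₂ := by
    rw [hi, ← hXsum, map_add]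
  have he₁ : Module.End.HasEigenvalue (ρ X₁) (χ i X₁) := (hχ X₁ _).2 ⟨i, rfl⟩
  have he₂ : Module.End.HasEigenvalue (ρ X₂) (χ i X₂) := (hχ X₂ _).2 ⟨i, rfl⟩
  have him₁ : (χ i X₁).im = 0 := h₁ X₁ hX₁ _ he₁
  have him₂ : (χ i X₂).im = 0 := h₂ X₂ hX₂ _ he₂
  rw [hval, Complex.add_im, him₁, him₂, add_zero]
end

section
/- Let V be a finite-dimensional real vector space, S a skew-symmetric operator (with respect to some inner product) on V, and A an operator commuting with S all of whose complex eigenvalues are real. Set D = S + A. Then ker D = ker S ∩ ker A. -/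
open scoped InnerProductSpace
open Polynomial TensorProduct

private lemma skew_strip {V : Type*} [NormedAddCommGroup V] [InnerProductSpace ℝ V]
    (T : V →ₗ[ℝ] V) (hT : ∀ x y : V, ⟪T x, y⟫_ℝ = -⟪x, T y⟫_ℝ)
    (s : Multiset ℝ) :
    ∀ x : V, (aeval T) (s.map fun r => X - C r).prod x = 0 → T x = 0 := by
  have hself : ∀ y : V, ⟪T y, y⟫_ℝ = 0 := fun y => by
    have h1 := hT y y
    have h2 : ⟪y, T y⟫_ℝ = ⟪T y, y⟫_ℝ := real_inner_comm _ _
    linarith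
  have hcomm : ∀ (q : ℝ[X]) (y : V), (aeval T) q (T y) = T ((aeval T) q y) := by
    intro q y
    have h : (aeval T) q * T = T * (aeval T) q := by
      calc (aeval T) q * T = aeval T (q * X) := by rw [map_mul, aeval_X]
      _ = aeval T (X * q) := by rw [mul_comm]
      _ = T * (aeval T) q := by rw [map_mul, aeval_X]
    calc (aeval T) q (T y) = ((aeval T) q * T) y := rfl
    _ = (T * (aeval T) q) y := by rw [h]
    _ = T ((aeval T) q y) := rfl
  induction s using Multiset.induction with
  | empty =>
    intro x hx
    simp only [Multiset.map_zero, Multiset.prod_zero, map_one, Module.End.one_apply] at hx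
    simp [hx]
  | cons r s ih =>
    intro x hx
    rw [Multiset.map_cons, Multiset.prod_cons, map_mul, Module.End.mul_apply] at hx
    set y := (aeval T) (s.map fun r => X - C r).prod x with hy
    rw [map_sub, aeval_X, aeval_C, LinearMap.sub_apply, Module.algebraMap_end_apply] at hx
    by_cases hr : r = 0
    · subst hr
      have hTy : T y = 0 := by simpa using hx
      have h0 : (aeval T) (s.map fun r => X - C r).prod (T x) = 0 := by
        rw [hcomm, ← hy, hTy]
      have hTTx : T (T x) = 0 := ih (T x) h0
      have hz : ⟪T x, T x⟫_ℝ = 0 := by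
        rw [hT x (T x), hTTx, inner_zero_right, neg_zero]
      exact inner_self_eq_zero.mp hz
    · have hy0 : y = 0 := by
        have hTy : T y = r • y := by rwa [sub_eq_zero] at hx
        have h0 := hself y
        rw [hTy, real_inner_smul_left] at h0
        rcases mul_eq_zero.mp h0 with h | h
        · exact absurd h hr
        · exact inner_self_eq_zero.mp h
      exact ih x (by rw [← hy]; exact hy0)

/-- Let `S` be a skew-symmetric endomorphism of a finite-dimensional real inner
product space and let `A` be an endomorphism commuting with `S` all of whose
complex eigenvalues are real.  Then `ker (S + A) = ker S ⊓ ker A`. -/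
theorem ker_skew_add_real_eigenvalues
    {V : Type*} [NormedAddCommGroup V] [InnerProductSpace ℝ V] [FiniteDimensional ℝ V]
    (S A : V →ₗ[ℝ] V)
    (hS : ∀ x y : V, ⟪S x, y⟫_ℝ = -⟪x, S y⟫_ℝ)
    (hcomm : Commute S A)
    (hA : ∀ μ : ℂ, Module.End.HasEigenvalue (LinearMap.baseChange ℂ A) μ → μ.im = 0) :
    LinearMap.ker (S + A) = LinearMap.ker S ⊓ LinearMap.ker A := by
  -- the polynomial `p` over `ℝ`, product of `X - r` over the (real) eigenvalues of `A`
  set Ac := LinearMap.baseChange ℂ A with hAcdef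
  set m := minpoly ℂ Ac with hmdef
  have hm : m.Monic := minpoly.monic (Algebra.IsIntegral.isIntegral _)
  have hsplit : Splits m := IsAlgClosed.splits _
  have hroots : ∀ μ ∈ m.roots, μ.im = 0 := by
    intro μ hμ
    exact hA μ (Module.End.hasEigenvalue_of_isRoot (isRoot_of_mem_roots hμ))
  set p : ℝ[X] := ((m.roots.map Complex.re).map fun r => X - C r).prod with hp
  have hpmap : p.map (algebraMap ℝ ℂ) = m := by
    rw [hp, Polynomial.map_multiset_prod, Multiset.map_map, Multiset.map_map]
    have hcongr : ∀ μ ∈ m.roots,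
        Polynomial.map (algebraMap ℝ ℂ) (((fun r : ℝ => X - C r) ∘ Complex.re) μ) = X - C μ := by
      intro μ hμ
      simp only [Function.comp_apply, Polynomial.map_sub, Polynomial.map_X, Polynomial.map_C]
      congr 1
      · congr 1
        exact Complex.ext (by simp) (by simp [hroots μ hμ])
    calc (m.roots.map fun μ =>
          Polynomial.map (algebraMap ℝ ℂ) (((fun r : ℝ => X - C r) ∘ Complex.re) μ)).prod
        = (m.roots.map fun μ => X - C μ).prod := by rw [Multiset.map_congr rfl hcongr]
      _ = m := (hsplit.eq_prod_roots_of_monic hm).symm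
  -- `p` annihilates `A`
  have hbase : LinearMap.baseChange ℂ ((aeval A) p) = 0 := by
    have h1 : LinearMap.baseChange ℂ ((aeval A) p) = (aeval Ac) p :=
      (aeval_algHom_apply (Module.End.baseChangeHom ℝ ℂ V) A p).symm
    rw [h1, ← aeval_map_algebraMap ℂ, hpmap, hmdef]
    exact minpoly.aeval ℂ Ac
  have hpA : (aeval A) p = 0 := by
    ext x
    have h2 : (1 : ℂ) ⊗ₜ[ℝ] ((aeval A) p x) = 0 := by
      have h := congrArg (fun f => f ((1 : ℂ) ⊗ₜ[ℝ] x)) hbase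
      simpa [LinearMap.baseChange_tmul] using h
    have h3 := congrArg ((TensorProduct.lid ℝ V).toLinearMap.comp
        (LinearMap.rTensor V Complex.reLm)) h2
    simpa using h3
  apply le_antisymm
  · intro x hx
    rw [LinearMap.mem_ker] at hx
    -- on ker (S+A), powers of `-S` agree with powers of `A`
    have hAW : ∀ y : V, (S + A) y = 0 → (S + A) (A y) = 0 := by
      intro y hy
      have h : (S + A) * A = A * (S + A) := by rw [add_mul, mul_add, hcomm.eq]
      calc (S + A) (A y) = ((S + A) * A) y := rfl
        _ = (A * (S + A)) y := by rw [h]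
        _ = A ((S + A) y) := rfl
        _ = 0 := by rw [hy, map_zero]
    have key : ∀ n : ℕ, ((-S) ^ n) x = (A ^ n) x ∧ (S + A) ((A ^ n) x) = 0 := by
      intro n
      induction n with
      | zero => exact ⟨rfl, by simpa using hx⟩
      | succ n ih =>
        obtain ⟨h1, h2⟩ := ih
        have hSA : S ((A ^ n) x) = -(A ((A ^ n) x)) := by
          have h := h2
          rw [LinearMap.add_apply] at h
          exact eq_neg_of_add_eq_zero_left h
        constructor
        · calc ((-S) ^ (n+1)) x = (-S) (((-S) ^ n) x) := by rw [pow_succ']; rfl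
          _ = (-S) ((A ^ n) x) := by rw [h1]
          _ = -(S ((A ^ n) x)) := rfl
          _ = A ((A ^ n) x) := by rw [hSA, neg_neg]
          _ = (A ^ (n+1)) x := by rw [pow_succ']; rfl
        · calc (S + A) ((A ^ (n+1)) x) = (S + A) (A ((A ^ n) x)) := by rw [pow_succ']; rfl
          _ = 0 := hAW _ h2
    have haeval : (aeval (-S)) p x = 0 := by
      have heq : (aeval (-S)) p x = (aeval A) p x := by
        rw [aeval_eq_sum_range' (lt_add_one p.natDegree),
          aeval_eq_sum_range' (lt_add_one p.natDegree),
          LinearMap.sum_apply, LinearMap.sum_apply]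
        refine Finset.sum_congr rfl fun i _ => ?_
        rw [LinearMap.smul_apply, LinearMap.smul_apply, (key i).1]
      rw [heq, hpA]
      rfl
    -- `-S` is skew-symmetric, so `(-S) x = 0`
    have hTskew : ∀ u v : V, ⟪(-S) u, v⟫_ℝ = -⟪u, (-S) v⟫_ℝ := by
      intro u v
      have := hS u v
      simp only [LinearMap.neg_apply, inner_neg_left, inner_neg_right]
      linarith
    have hSx : (-S) x = 0 := skew_strip (-S) hTskew (m.roots.map Complex.re) x haeval
    have hSx0 : S x = 0 := by
      have := congrArg Neg.neg hSx
      simpa using this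
    have hAx0 : A x = 0 := by
      have h := hx
      rw [LinearMap.add_apply, hSx0, zero_add] at h
      exact h
    exact Submodule.mem_inf.mpr ⟨LinearMap.mem_ker.mpr hSx0, LinearMap.mem_ker.mpr hAx0⟩
  · intro x hx
    obtain ⟨h1, h2⟩ := Submodule.mem_inf.mp hx
    rw [LinearMap.mem_ker] at h1 h2 ⊢
    rw [LinearMap.add_apply, h1, h2, add_zero]
end
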